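/- arXiv:1411.1092 — 3 statements merged into one kernel-verified Lean document; each statement's English description precedes it below -/
import Mathlib

section
/- Let $X$, $Y$ be compact metric spaces, $A: X\times Y\to\mathbb{R}$ Lipschitz satisfying $|A(x,y)-A(x',y)-A(x,y')+A(x',y')| \le C\, d_X(x,x')\, d_Y(y,y')$ for some $C>0$. Define $\psi_\nu(x) = \int_Y A(x,y)\,d\nu(y)$ for a probability measure $\nu$ on $Y$. Then the map $\nu \mapsto \psi_\nu$ from probability measures on $Y$ (with the Wasserstein-1 metric) to the Banach space of Lipschitz functions on $X$ (with norm $\|\psi\| = \|\psi\|_0 + \mathrm{Lip}(\psi)$) is Lipschitz with constant at most $C + \mathrm{Lip}(A)$: $\|\psi_\nu - \psi_{\nu'}\| \le (C + \mathrm{Lip}(A))\, W^1(\nu,\nu')$. -/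
open MeasureTheory

/-- The Wasserstein-1 distance, via Kantorovich-Rubinstein duality. -/
noncomputable def W1 {X : Type*} [MeasurableSpace X] [PseudoMetricSpace X]
    (μ₁ μ₂ : Measure X) : ℝ :=
  ⨆ φ : {f : X → ℝ // LipschitzWith 1 f}, (∫ x, φ.1 x ∂μ₁ - ∫ x, φ.1 x ∂μ₂)

/-- The Lipschitz seminorm of a map between metric spaces. -/
noncomputable def lipConst {X Y : Type*} [PseudoMetricSpace X] [PseudoMetricSpace Y]
    (f : X → Y) : NNReal :=
  sInf {K : NNReal | LipschitzWith K f}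

/-- The norm `‖ψ‖ = ‖ψ‖₀ + Lip(ψ)` on the space of Lipschitz functions. -/
noncomputable def lipNorm {X : Type*} [PseudoMetricSpace X] (f : X → ℝ) : ℝ :=
  (⨆ x, |f x|) + (lipConst f : ℝ)

lemma lipschitzWith_lipConst {α β : Type*} [PseudoMetricSpace α] [PseudoMetricSpace β]
    (f : α → β) (h : ∃ K, LipschitzWith K f) : LipschitzWith (lipConst f) f := by
  apply LipschitzWith.of_dist_le_mul
  intro x y
  refine le_of_forall_pos_le_add fun ε hε => ?_
  set S := {K : NNReal | LipschitzWith K f} with hS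
  have hne : S.Nonempty := h
  set d := dist x y with hd
  have hd0 : 0 ≤ d := dist_nonneg
  set δ : NNReal := Real.toNNReal (ε / (d + 1)) with hδ
  have hδpos : 0 < δ := Real.toNNReal_pos.2 (by positivity)
  obtain ⟨K, hK, hKlt⟩ := exists_lt_of_csInf_lt hne (lt_add_of_pos_right (sInf S) hδpos)
  have hI : sInf S = lipConst f := rfl
  have h1 : dist (f x) (f y) ≤ (K : ℝ) * d := hK.dist_le_mul x y
  have h2 : (K : ℝ) ≤ (lipConst f : ℝ) + (δ : ℝ) := by
    rw [hI] at hKlt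
    exact_mod_cast hKlt.le
  have h3 : (δ : ℝ) = ε / (d + 1) := Real.coe_toNNReal _ (by positivity)
  have h4 : (δ : ℝ) * d ≤ ε := by
    rw [h3, div_mul_eq_mul_div, div_le_iff₀ (by positivity)]
    nlinarith
  calc dist (f x) (f y) ≤ (K : ℝ) * d := h1
    _ ≤ ((lipConst f : ℝ) + (δ : ℝ)) * d := by nlinarith
    _ = (lipConst f : ℝ) * d + (δ : ℝ) * d := by ring
    _ ≤ (lipConst f : ℝ) * d + ε := by linarith

lemma W1_bddAbove {Y : Type*} [MetricSpace Y] [CompactSpace Y] [MeasurableSpace Y] [BorelSpace Y]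
    (ν ν' : Measure Y) [IsProbabilityMeasure ν] [IsProbabilityMeasure ν'] (y₀ : Y) :
    BddAbove (Set.range fun φ : {f : Y → ℝ // LipschitzWith 1 f} =>
      (∫ x, φ.1 x ∂ν - ∫ x, φ.1 x ∂ν')) := by
  refine ⟨2 * Metric.diam (Set.univ : Set Y), ?_⟩
  rintro r ⟨φ, rfl⟩
  have hint : ∀ (μ : Measure Y) [IsProbabilityMeasure μ], Integrable φ.1 μ := by
    intro μ _
    have := φ.2.continuous.continuousOn.integrableOn_compact (μ := μ) isCompact_univ
    simpa [integrableOn_univ] using this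
  have hb : ∀ y : Y, ‖φ.1 y - φ.1 y₀‖ ≤ Metric.diam (Set.univ : Set Y) := by
    intro y
    calc ‖φ.1 y - φ.1 y₀‖ = dist (φ.1 y) (φ.1 y₀) := by
          rw [Real.norm_eq_abs, Real.dist_eq]
      _ ≤ 1 * dist y y₀ := φ.2.dist_le_mul y y₀
      _ = dist y y₀ := one_mul _
      _ ≤ Metric.diam (Set.univ : Set Y) :=
          Metric.dist_le_diam_of_mem isCompact_univ.isBounded trivial trivial
  have key : ∀ (μ : Measure Y) [IsProbabilityMeasure μ],
      |∫ x, φ.1 x ∂μ - φ.1 y₀| ≤ Metric.diam (Set.univ : Set Y) := by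
    intro μ _
    have h1 : ∫ x, φ.1 x ∂μ - φ.1 y₀ = ∫ x, (φ.1 x - φ.1 y₀) ∂μ := by
      rw [integral_sub (hint μ) (integrable_const _), integral_const]
      simp
    rw [h1]
    have := norm_integral_le_of_norm_le_const (μ := μ) (f := fun x => φ.1 x - φ.1 y₀)
      (C := Metric.diam (Set.univ : Set Y)) (Filter.Eventually.of_forall hb)
    simpa [Real.norm_eq_abs] using this
  have h1 := key ν
  have h2 := key ν'
  have := abs_sub_abs_le_abs_sub (∫ x, φ.1 x ∂ν - φ.1 y₀) (∫ x, φ.1 x ∂ν' - φ.1 y₀)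
  calc ∫ x, φ.1 x ∂ν - ∫ x, φ.1 x ∂ν'
      = (∫ x, φ.1 x ∂ν - φ.1 y₀) - (∫ x, φ.1 x ∂ν' - φ.1 y₀) := by ring
    _ ≤ |(∫ x, φ.1 x ∂ν - φ.1 y₀) - (∫ x, φ.1 x ∂ν' - φ.1 y₀)| := le_abs_self _
    _ ≤ |∫ x, φ.1 x ∂ν - φ.1 y₀| + |∫ x, φ.1 x ∂ν' - φ.1 y₀| := abs_sub _ _
    _ ≤ 2 * Metric.diam (Set.univ : Set Y) := by linarith

lemma W1_nonneg {Y : Type*} [MetricSpace Y] [CompactSpace Y] [MeasurableSpace Y] [BorelSpace Y]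
    (ν ν' : Measure Y) [IsProbabilityMeasure ν] [IsProbabilityMeasure ν'] (y₀ : Y) :
    0 ≤ W1 ν ν' := by
  have bdd := W1_bddAbove ν ν' y₀
  have := le_ciSup bdd ⟨fun _ => (0 : ℝ), (LipschitzWith.const 0).weaken (zero_le_one)⟩
  simpa [W1] using this

lemma integral_sub_le_W1 {Y : Type*} [MetricSpace Y] [CompactSpace Y] [MeasurableSpace Y]
    [BorelSpace Y] (ν ν' : Measure Y) [IsProbabilityMeasure ν] [IsProbabilityMeasure ν']
    (y₀ : Y) (f : Y → ℝ) (K : ℝ) (hK : 0 ≤ K) (hf : LipschitzWith K.toNNReal f) :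
    ∫ y, f y ∂ν - ∫ y, f y ∂ν' ≤ K * W1 ν ν' := by
  have bdd := W1_bddAbove ν ν' y₀
  rcases eq_or_lt_of_le hK with h0 | hKpos
  · -- K = 0 : f is constant
    have hconst : ∀ y, f y = f y₀ := by
      intro y
      have := hf.dist_le_mul y y₀
      rw [← h0] at this
      simp at this
      exact dist_le_zero.mp (by simpa using this)
    have : ∀ (μ : Measure Y) [IsProbabilityMeasure μ], ∫ y, f y ∂μ = f y₀ := by
      intro μ _
      rw [integral_congr_ae (Filter.Eventually.of_forall hconst)]
      simp
    rw [this ν, this ν', ← h0]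
    simp
  · have hKcoe : (K.toNNReal : ℝ) = K := Real.coe_toNNReal _ hK
    have h1 : LipschitzWith 1 (fun y => K⁻¹ * f y) := by
      apply LipschitzWith.of_dist_le_mul
      intro y y'
      have := hf.dist_le_mul y y'
      rw [hKcoe] at this
      rw [Real.dist_eq, ← mul_sub, abs_mul, abs_inv, abs_of_pos hKpos]
      rw [Real.dist_eq] at this
      calc K⁻¹ * |f y - f y'| ≤ K⁻¹ * (K * dist y y') := by
            apply mul_le_mul_of_nonneg_left this (by positivity)
        _ = dist y y' := by field_simp
        _ = 1 * dist y y' := (one_mul _).symm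
    -- apply duality
    have hle : (∫ y, K⁻¹ * f y ∂ν) - (∫ y, K⁻¹ * f y ∂ν') ≤ W1 ν ν' :=
      le_ciSup bdd ⟨fun y => K⁻¹ * f y, h1⟩
    have hint : ∀ (μ : Measure Y), ∫ y, K⁻¹ * f y ∂μ = K⁻¹ * ∫ y, f y ∂μ := by
      intro μ
      simpa [smul_eq_mul] using integral_smul (μ := μ) K⁻¹ f
    rw [hint ν, hint ν'] at hle
    have h2 : K⁻¹ * (∫ y, f y ∂ν - ∫ y, f y ∂ν') ≤ W1 ν ν' := by
      rw [mul_sub]; exact hle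
    have h3 := mul_le_mul_of_nonneg_left h2 hK
    rwa [← mul_assoc, mul_inv_cancel₀ (ne_of_gt hKpos), one_mul] at h3

/-- If `A` is Lipschitz and satisfies the mixed-difference condition with constant `C`,
then `ν ↦ ψ_ν` is Lipschitz with constant `C + Lip(A)` from (probability measures on `Y`,
`W¹`) to the Banach space of Lipschitz functions on `X` with norm `‖·‖₀ + Lip(·)`. -/
theorem lipNorm_integral_param_sub_le
    {X Y : Type*} [MetricSpace X] [CompactSpace X] [Nonempty X]
    [MetricSpace Y] [CompactSpace Y] [MeasurableSpace Y] [BorelSpace Y]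
    (A : X × Y → ℝ) (hA : ∃ K, LipschitzWith K A) (C : ℝ) (hC : 0 < C)
    (hmix : ∀ x x' : X, ∀ y y' : Y,
      |A (x, y) - A (x', y) - A (x, y') + A (x', y')| ≤ C * dist x x' * dist y y')
    (ν ν' : Measure Y) [IsProbabilityMeasure ν] [IsProbabilityMeasure ν'] :
    lipNorm (fun x : X => (∫ y, A (x, y) ∂ν) - ∫ y, A (x, y) ∂ν') ≤
      (C + (lipConst A : ℝ)) * W1 ν ν' := by
  have hY : Nonempty Y := by
    by_contra h
    have h0 : ν Set.univ = 0 := by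
      rw [Set.univ_eq_empty_iff.2 (not_nonempty_iff.1 h)]; simp
    rw [measure_univ] at h0; exact one_ne_zero h0
  obtain ⟨y₀⟩ := hY
  set W := W1 ν ν' with hW
  have hW0 : 0 ≤ W := W1_nonneg ν ν' y₀
  have hAlip : LipschitzWith (lipConst A) A := lipschitzWith_lipConst A hA
  set L : ℝ := (lipConst A : ℝ) with hL
  have hL0 : 0 ≤ L := (lipConst A).coe_nonneg
  set g : X → ℝ := fun x => (∫ y, A (x, y) ∂ν) - ∫ y, A (x, y) ∂ν' with hg
  -- sup bound
  have hslice : ∀ x : X, LipschitzWith L.toNNReal (fun y => A (x, y)) := by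
    intro x
    have := hAlip.comp (LipschitzWith.prodMk_left x)
    rw [hL, Real.toNNReal_coe]
    simpa [Function.comp_def] using this
  have hsup : ∀ x, |g x| ≤ L * W := by
    intro x
    rw [abs_le]
    constructor
    · have := integral_sub_le_W1 ν' ν y₀ (fun y => A (x, y)) L hL0 (hslice x)
      have hWsym : W1 ν' ν ≥ 0 := W1_nonneg ν' ν y₀
      -- use negated function on (ν, ν') instead
      have hneg : LipschitzWith L.toNNReal (fun y => -A (x, y)) := (hslice x).neg
      have h2 := integral_sub_le_W1 ν ν' y₀ (fun y => -A (x, y)) L hL0 hneg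
      simp only [integral_neg] at h2
      simp only [hg]
      linarith
    · exact integral_sub_le_W1 ν ν' y₀ (fun y => A (x, y)) L hL0 (hslice x)
  have hsup' : (⨆ x, |g x|) ≤ L * W := ciSup_le hsup
  -- Lipschitz bound
  have hintx : ∀ (x : X) (μ : Measure Y) [IsProbabilityMeasure μ],
      Integrable (fun y => A (x, y)) μ := by
    intro x μ _
    have hc : Continuous (fun y => A (x, y)) :=
      hAlip.continuous.comp (Continuous.prodMk_right x)
    have := hc.continuousOn.integrableOn_compact (μ := μ) isCompact_univ
    simpa [integrableOn_univ] using this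
  have hdiff : ∀ x x' : X, g x - g x' ≤ (C * dist x x') * W := by
    intro x x'
    set f : Y → ℝ := fun y => A (x, y) - A (x', y) with hf
    have hflip : LipschitzWith (C * dist x x').toNNReal f := by
      apply LipschitzWith.of_dist_le_mul
      intro y y'
      rw [Real.coe_toNNReal _ (by positivity)]
      rw [Real.dist_eq]
      have := hmix x x' y y'
      calc |f y - f y'| = |A (x, y) - A (x', y) - A (x, y') + A (x', y')| := by
            rw [hf]; ring_nf
        _ ≤ C * dist x x' * dist y y' := this
    have heq : ∀ (μ : Measure Y) [IsProbabilityMeasure μ],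
        ∫ y, f y ∂μ = (∫ y, A (x, y) ∂μ) - ∫ y, A (x', y) ∂μ := by
      intro μ _
      exact integral_sub (hintx x μ) (hintx x' μ)
    have := integral_sub_le_W1 ν ν' y₀ f (C * dist x x') (by positivity) hflip
    rw [heq ν, heq ν'] at this
    simp only [hg]
    linarith
  have hglip : LipschitzWith (C * W).toNNReal g := by
    apply LipschitzWith.of_dist_le_mul
    intro x x'
    rw [Real.coe_toNNReal _ (by positivity), Real.dist_eq, abs_le]
    constructor
    · have h := hdiff x' x
      rw [dist_comm x' x] at h
      have he : C * dist x x' * W = C * W * dist x x' := by ring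
      linarith [he ▸ h]
    · have h := hdiff x x'
      have he : C * dist x x' * W = C * W * dist x x' := by ring
      linarith [he ▸ h]
  have hlc : (lipConst g : ℝ) ≤ C * W := by
    have : lipConst g ≤ (C * W).toNNReal :=
      csInf_le (OrderBot.bddBelow _) hglip
    calc (lipConst g : ℝ) ≤ ((C * W).toNNReal : ℝ) := by exact_mod_cast this
      _ = C * W := Real.coe_toNNReal _ (by positivity)
  have : lipNorm g ≤ L * W + C * W := by
    rw [lipNorm]
    exact add_le_add hsup' hlc
  calc lipNorm g ≤ L * W + C * W := this
    _ = (C + L) * W := by ring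
end

section
/- Let $X$, $Y$ be compact metric spaces, $T, S$ continuous self-maps of $X$ and $Y$, and $A_1, A_2: X\times Y \to \mathbb{R}$ Lipschitz. Define $BR_1(\nu) = \mathrm{argmax}_{\mu\in\mathcal{M}_T(X)} \int A_1\, d(\mu\otimes\nu)$ and $BR_2(\mu) = \mathrm{argmax}_{\nu\in\mathcal{M}_S(Y)} \int A_2\, d(\mu\otimes\nu)$, and let $BR(\mu,\nu) = BR_1(\nu)\times BR_2(\mu)$ on $K = \mathcal{M}_T(X)\times\mathcal{M}_S(Y)$. Then the graph of $BR$ is closed: if $(\mu_n,\nu_n) \to (\mu,\nu)$, $(\hat\mu_n,\hat\nu_n)\to(\hat\mu,\hat\nu)$ weakly-*, and $(\hat\mu_n,\hat\nu_n) \in BR(\mu_n,\nu_n)$ for all $n$, then $(\hat\mu,\hat\nu)\in BR(\mu,\nu)$. -/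
open MeasureTheory Filter

section Aux

variable {X Y : Type*} [MetricSpace X] [CompactSpace X] [MeasurableSpace X] [BorelSpace X]
  [MetricSpace Y] [CompactSpace Y] [MeasurableSpace Y] [BorelSpace Y]

private lemma cont_integrable_aux {Z : Type*} [MetricSpace Z] [CompactSpace Z]
    [MeasurableSpace Z] [BorelSpace Z] {m : Measure Z} [IsFiniteMeasure m] {f : Z → ℝ}
    (hf : Continuous f) : Integrable f m :=
  (BoundedContinuousFunction.mkOfCompact ⟨f, hf⟩).integrable m

private lemma key_tendsto (A : X × Y → ℝ) {K : NNReal} (hA : LipschitzWith K A)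
    {μn : ℕ → ProbabilityMeasure X} {νn : ℕ → ProbabilityMeasure Y}
    {μ : ProbabilityMeasure X} {ν : ProbabilityMeasure Y}
    (hμ : Tendsto μn atTop (nhds μ)) (hν : Tendsto νn atTop (nhds ν)) :
    Tendsto (fun n => ∫ p, A p ∂((μn n : Measure X).prod (νn n : Measure Y))) atTop
      (nhds (∫ p, A p ∂((μ : Measure X).prod (ν : Measure Y)))) := by
  have hAc : Continuous A := hA.continuous
  have hAx : ∀ x : X, Continuous fun y => A (x, y) :=
    fun x => hAc.comp (Continuous.prodMk_right x)
  have hint : ∀ (x : X) (m : Measure Y) [IsFiniteMeasure m],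
      Integrable (fun y => A (x, y)) m := fun x m _ => cont_integrable_aux (hAx x)
  -- pointwise distance bound
  have hdistA : ∀ (x x' : X) (y : Y), ‖A (x, y) - A (x', y)‖ ≤ (K : ℝ) * dist x x' := by
    intro x x' y
    have := hA.dist_le_mul (x, y) (x', y)
    simpa [Real.dist_eq, Prod.dist_eq, max_eq_left dist_nonneg] using this
  have hlip : ∀ (m : Measure Y), IsProbabilityMeasure m → ∀ x x' : X,
      dist (∫ y, A (x, y) ∂m) (∫ y, A (x', y) ∂m) ≤ (K : ℝ) * dist x x' := by
    intro m hm x x'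
    rw [Real.dist_eq, ← integral_sub (hint x m) (hint x' m)]
    calc |∫ y, (A (x, y) - A (x', y)) ∂m|
        ≤ ((K : ℝ) * dist x x') * (m Set.univ).toReal :=
          norm_integral_le_of_norm_le_const (ae_of_all m fun y => hdistA x x' y)
      _ = (K : ℝ) * dist x x' := by simp [hm.measure_univ]
  set g : X → ℝ := fun x => ∫ y, A (x, y) ∂(ν : Measure Y) with hg
  set gn : ℕ → X → ℝ := fun n x => ∫ y, A (x, y) ∂(νn n : Measure Y) with hgn
  have hglip : ∀ x x', dist (g x) (g x') ≤ (K : ℝ) * dist x x' :=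
    fun x x' => hlip (ν : Measure Y) inferInstance x x'
  have hgc : Continuous g :=
    (LipschitzWith.of_dist_le_mul hglip).continuous
  -- pointwise convergence gn → g
  have hpt : Tendsto gn atTop (nhds g) := by
    rw [tendsto_pi_nhds]
    intro x
    exact ProbabilityMeasure.tendsto_iff_forall_integral_tendsto.mp hν
      (BoundedContinuousFunction.mkOfCompact ⟨fun y => A (x, y), hAx x⟩)
  -- equicontinuity
  have heq : Equicontinuous gn := by
    apply Metric.equicontinuous_of_continuity_modulus (fun t => (K : ℝ) * t)
    · exact (continuous_const.mul continuous_id).tendsto' 0 0 (by simp)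
    · intro x x' n
      exact hlip (νn n : Measure Y) inferInstance x x'
  -- uniform convergence
  have hunif : TendstoUniformly gn g atTop :=
    UniformFun.tendsto_iff_tendstoUniformly.mp ((heq.tendsto_uniformFun_iff_pi atTop g).mpr hpt)
  -- rewrite product integrals via Fubini
  have hfub : ∀ (m : Measure X) (m' : Measure Y), IsProbabilityMeasure m →
      IsProbabilityMeasure m' →
      ∫ p, A p ∂(m.prod m') = ∫ x, ∫ y, A (x, y) ∂m' ∂m := by
    intro m m' hm hm'
    exact integral_prod A (cont_integrable_aux hAc)
  have hfub1 : ∀ n, ∫ p, A p ∂((μn n : Measure X).prod (νn n : Measure Y)) = ∫ x, gn n x ∂(μn n : Measure X) :=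
    fun n => hfub _ _ inferInstance inferInstance
  have hfub2 : ∫ p, A p ∂((μ : Measure X).prod (ν : Measure Y)) = ∫ x, g x ∂(μ : Measure X) :=
    hfub _ _ inferInstance inferInstance
  simp only [hfub1, hfub2]
  -- weak convergence against g
  have hgconv : Tendsto (fun n => ∫ x, g x ∂(μn n : Measure X)) atTop
      (nhds (∫ x, g x ∂(μ : Measure X))) :=
    ProbabilityMeasure.tendsto_iff_forall_integral_tendsto.mp hμ
      (BoundedContinuousFunction.mkOfCompact ⟨g, hgc⟩)
  rw [Metric.tendsto_atTop]
  intro ε hε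
  have hε2 : 0 < ε / 2 := by linarith
  have h1 : ∀ᶠ n in atTop, ∀ x, dist (g x) (gn n x) < ε / 2 :=
    Metric.tendstoUniformly_iff.mp hunif (ε / 2) hε2
  have h2 : ∀ᶠ n in atTop, dist (∫ x, g x ∂(μn n : Measure X)) (∫ x, g x ∂(μ : Measure X)) < ε / 2 :=
    eventually_atTop.mpr (Metric.tendsto_atTop.mp hgconv (ε / 2) hε2)
  rcases eventually_atTop.mp (h1.and h2) with ⟨N, hN⟩
  refine ⟨N, fun n hn => ?_⟩
  obtain ⟨hn1, hn2⟩ := hN n hn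
  have hgn_int : Integrable (gn n) (μn n : Measure X) :=
    cont_integrable_aux (LipschitzWith.of_dist_le_mul
      (fun x x' => hlip (νn n : Measure Y) inferInstance x x')).continuous
  have hg_int : Integrable g (μn n : Measure X) := cont_integrable_aux hgc
  have hd1 : dist (∫ x, gn n x ∂(μn n : Measure X)) (∫ x, g x ∂(μn n : Measure X)) ≤ ε / 2 := by
    have hb : ∀ x, ‖gn n x - g x‖ ≤ ε / 2 := by
      intro x
      have h := (hn1 x).le
      rw [Real.dist_eq] at h
      rw [Real.norm_eq_abs, abs_sub_comm]
      exact h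
    have hnorm := norm_integral_le_of_norm_le_const (μ := (μn n : Measure X))
      (f := fun x => gn n x - g x) (C := ε / 2) (ae_of_all _ hb)
    rw [Real.dist_eq, ← integral_sub hgn_int hg_int]
    simpa using hnorm
  calc dist (∫ x, gn n x ∂(μn n : Measure X)) (∫ x, g x ∂(μ : Measure X))
      ≤ dist (∫ x, gn n x ∂(μn n : Measure X)) (∫ x, g x ∂(μn n : Measure X)) +
        dist (∫ x, g x ∂(μn n : Measure X)) (∫ x, g x ∂(μ : Measure X)) := dist_triangle _ _ _
    _ < ε / 2 + ε / 2 := add_lt_add_of_le_of_lt hd1 hn2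
    _ = ε := by linarith

end Aux

/-- The graph of the best-response map `BR(μ,ν) = BR₁(ν) × BR₂(μ)` is closed: if
`(μₙ,νₙ) → (μ,ν)`, `(μ̂ₙ,ν̂ₙ) → (μ̂,ν̂)` weakly-*, all measures invariant, and
`(μ̂ₙ,ν̂ₙ) ∈ BR(μₙ,νₙ)` for all `n`, then `(μ̂,ν̂) ∈ BR(μ,ν)`. -/
theorem best_response_graph_closed
    {X Y : Type*} [MetricSpace X] [CompactSpace X] [MeasurableSpace X] [BorelSpace X]
    [MetricSpace Y] [CompactSpace Y] [MeasurableSpace Y] [BorelSpace Y]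
    (T : X → X) (hT : Continuous T) (S : Y → Y) (hS : Continuous S)
    (A₁ A₂ : X × Y → ℝ) (hA₁ : ∃ K, LipschitzWith K A₁) (hA₂ : ∃ K, LipschitzWith K A₂)
    (μn hatμn : ℕ → ProbabilityMeasure X) (νn hatνn : ℕ → ProbabilityMeasure Y)
    (μ hatμ : ProbabilityMeasure X) (ν hatν : ProbabilityMeasure Y)
    (hinv : ∀ n, (μn n : Measure X).map T = (μn n : Measure X) ∧
      (hatμn n : Measure X).map T = (hatμn n : Measure X) ∧
      (νn n : Measure Y).map S = (νn n : Measure Y) ∧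
      (hatνn n : Measure Y).map S = (hatνn n : Measure Y))
    (hinvlim : (μ : Measure X).map T = (μ : Measure X) ∧
      (hatμ : Measure X).map T = (hatμ : Measure X) ∧
      (ν : Measure Y).map S = (ν : Measure Y) ∧
      (hatν : Measure Y).map S = (hatν : Measure Y))
    (hμn : Tendsto μn atTop (nhds μ)) (hνn : Tendsto νn atTop (nhds ν))
    (hhatμn : Tendsto hatμn atTop (nhds hatμ)) (hhatνn : Tendsto hatνn atTop (nhds hatν))
    (hBR1 : ∀ n, ∀ η : Measure X, IsProbabilityMeasure η → η.map T = η →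
      ∫ p, A₁ p ∂(η.prod (νn n : Measure Y)) ≤
        ∫ p, A₁ p ∂((hatμn n : Measure X).prod (νn n : Measure Y)))
    (hBR2 : ∀ n, ∀ η : Measure Y, IsProbabilityMeasure η → η.map S = η →
      ∫ p, A₂ p ∂((μn n : Measure X).prod η) ≤
        ∫ p, A₂ p ∂((μn n : Measure X).prod (hatνn n : Measure Y))) :
    (∀ η : Measure X, IsProbabilityMeasure η → η.map T = η →
      ∫ p, A₁ p ∂(η.prod (ν : Measure Y)) ≤
        ∫ p, A₁ p ∂((hatμ : Measure X).prod (ν : Measure Y))) ∧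
    (∀ η : Measure Y, IsProbabilityMeasure η → η.map S = η →
      ∫ p, A₂ p ∂((μ : Measure X).prod η) ≤
        ∫ p, A₂ p ∂((μ : Measure X).prod (hatν : Measure Y))) := by
  obtain ⟨K₁, hK₁⟩ := hA₁
  obtain ⟨K₂, hK₂⟩ := hA₂
  constructor
  · intro η hη hηT
    have hlhs := key_tendsto A₁ hK₁ (μn := fun _ => ⟨η, hη⟩) (μ := ⟨η, hη⟩)
      tendsto_const_nhds hνn
    have hrhs := key_tendsto A₁ hK₁ hhatμn hνn
    exact le_of_tendsto_of_tendsto' hlhs hrhs (fun n => hBR1 n η hη hηT)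
  · intro η hη hηS
    have hlhs := key_tendsto A₂ hK₂ (νn := fun _ => ⟨η, hη⟩) (ν := ⟨η, hη⟩) hμn
      tendsto_const_nhds
    have hrhs := key_tendsto A₂ hK₂ hμn hhatνn
    exact le_of_tendsto_of_tendsto' hlhs hrhs (fun n => hBR2 n η hη hηS)
end

section
/- Let $X = Y = \{0,1\}^{\mathbb{N}}$ with shift map $\sigma$, and $\bar 0 = (000\dots)$, $\bar 1 = (111\dots)$. Suppose $A_1, A_2: X\times Y \to \mathbb{R}$ are continuous functions satisfying: $A_1(\bar 0,\bar 0)=2$ and $A_1(x,\bar 0)<2$ for $x\ne\bar 0$; $A_2(\bar 0,\bar 0)=3$ and $A_2(\bar 0,y)<3$ for $y\ne\bar 0$; $A_1(\bar 1,\bar 1)=3$ and $A_1(x,\bar 1)<3$ for $x\ne\bar 1$; $A_2(\bar 1,\bar 1)=2$ and $A_2(\bar 1,y)<2$ for $y\ne\bar 1$. With payoffs $\varphi_i(\mu,\nu)=\int A_i\,d(\mu\otimes\nu)$, both $(\delta_{\bar 0},\delta_{\bar 0})$ and $(\delta_{\bar 1},\delta_{\bar 1})$ are Nash equilibria of the ergodic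 game; in particular, Nash equilibrium need not be unique. -/
open MeasureTheory

/-- The shift map on the Bernoulli space `{0,1}^ℕ`. -/
def shiftMap : (ℕ → Fin 2) → (ℕ → Fin 2) := fun x n => x (n + 1)

lemma integral_le_of_le {f : (ℕ → Fin 2) → ℝ} (hf : Continuous f) {c : ℝ}
    (hb : ∀ x, f x ≤ c) (η : Measure (ℕ → Fin 2)) [IsProbabilityMeasure η] :
    ∫ x, f x ∂η ≤ c := by
  have hint : Integrable f η := by
    rw [← integrableOn_univ]
    exact hf.continuousOn.integrableOn_compact' isCompact_univ MeasurableSet.univ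
  calc ∫ x, f x ∂η ≤ ∫ _, c ∂η := integral_mono hint (integrable_const c) hb
    _ = c := by simp

lemma key (A : (ℕ → Fin 2) × (ℕ → Fin 2) → ℝ) (hA : Continuous A)
    (a : ℕ → Fin 2) {c : ℝ} (heq : A (a, a) = c) (hlt : ∀ x, x ≠ a → A (x, a) < c)
    (η : Measure (ℕ → Fin 2)) (hη : IsProbabilityMeasure η) :
    ∫ p, A p ∂(η.prod (Measure.dirac a)) ≤
      ∫ p, A p ∂((Measure.dirac a).prod (Measure.dirac a)) := by
  haveI := hη
  have hm : Measurable fun x : ℕ → Fin 2 => (x, a) :=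
    measurable_id.prodMk measurable_const
  rw [Measure.prod_dirac, Measure.dirac_prod,
    integral_map hm.aemeasurable hA.aestronglyMeasurable,
    integral_map measurable_prodMk_left.aemeasurable hA.aestronglyMeasurable,
    integral_dirac]
  refine integral_le_of_le (hA.comp (continuous_id.prodMk continuous_const))
    (c := A (a, a)) (fun x => ?_) η
  rcases eq_or_ne x a with rfl | h
  · exact le_rfl
  · exact ((hlt x h).le).trans heq.ge

lemma key2 (A : (ℕ → Fin 2) × (ℕ → Fin 2) → ℝ) (hA : Continuous A)
    (a : ℕ → Fin 2) {c : ℝ} (heq : A (a, a) = c) (hlt : ∀ y, y ≠ a → A (a, y) < c)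
    (η : Measure (ℕ → Fin 2)) (hη : IsProbabilityMeasure η) :
    ∫ p, A p ∂((Measure.dirac a).prod η) ≤
      ∫ p, A p ∂((Measure.dirac a).prod (Measure.dirac a)) := by
  haveI := hη
  rw [Measure.dirac_prod, Measure.dirac_prod,
    integral_map measurable_prodMk_left.aemeasurable hA.aestronglyMeasurable,
    integral_map measurable_prodMk_left.aemeasurable hA.aestronglyMeasurable,
    integral_dirac]
  refine integral_le_of_le (hA.comp (continuous_const.prodMk continuous_id))
    (c := A (a, a)) (fun y => ?_) η
  rcases eq_or_ne y a with rfl | h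
  · exact le_rfl
  · exact ((hlt y h).le).trans heq.ge

/-- Non-uniqueness of Nash equilibrium: under the stated conditions on `A₁, A₂`, both
`(δ_0̄, δ_0̄)` and `(δ_1̄, δ_1̄)` are Nash equilibria of the ergodic game with payoffs
`φᵢ(μ,ν) = ∫ Aᵢ d(μ⊗ν)`. -/
theorem two_nash_equilibria
    (A₁ A₂ : (ℕ → Fin 2) × (ℕ → Fin 2) → ℝ) (hA₁ : Continuous A₁) (hA₂ : Continuous A₂)
    (zero : ℕ → Fin 2) (hzero : zero = fun _ => 0)
    (one : ℕ → Fin 2) (hone : one = fun _ => 1)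
    (h1 : A₁ (zero, zero) = 2) (h2 : ∀ x, x ≠ zero → A₁ (x, zero) < 2)
    (h3 : A₂ (zero, zero) = 3) (h4 : ∀ y, y ≠ zero → A₂ (zero, y) < 3)
    (h5 : A₁ (one, one) = 3) (h6 : ∀ x, x ≠ one → A₁ (x, one) < 3)
    (h7 : A₂ (one, one) = 2) (h8 : ∀ y, y ≠ one → A₂ (one, y) < 2) :
    ((∀ η : Measure (ℕ → Fin 2), IsProbabilityMeasure η → η.map shiftMap = η →
        ∫ p, A₁ p ∂(η.prod (Measure.dirac zero)) ≤
          ∫ p, A₁ p ∂((Measure.dirac zero).prod (Measure.dirac zero))) ∧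
     (∀ η : Measure (ℕ → Fin 2), IsProbabilityMeasure η → η.map shiftMap = η →
        ∫ p, A₂ p ∂((Measure.dirac zero).prod η) ≤
          ∫ p, A₂ p ∂((Measure.dirac zero).prod (Measure.dirac zero)))) ∧
    ((∀ η : Measure (ℕ → Fin 2), IsProbabilityMeasure η → η.map shiftMap = η →
        ∫ p, A₁ p ∂(η.prod (Measure.dirac one)) ≤
          ∫ p, A₁ p ∂((Measure.dirac one).prod (Measure.dirac one))) ∧
     (∀ η : Measure (ℕ → Fin 2), IsProbabilityMeasure η → η.map shiftMap = η →
        ∫ p, A₂ p ∂((Measure.dirac one).prod η) ≤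
          ∫ p, A₂ p ∂((Measure.dirac one).prod (Measure.dirac one)))) := by
  exact ⟨⟨fun η hη _ => key A₁ hA₁ zero h1 h2 η hη,
          fun η hη _ => key2 A₂ hA₂ zero h3 h4 η hη⟩,
         ⟨fun η hη _ => key A₁ hA₁ one h5 h6 η hη,
          fun η hη _ => key2 A₂ hA₂ one h7 h8 η hη⟩⟩
end
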